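/- arXiv:1704.01295 — 2 statements merged into one kernel-verified Lean document; each statement's English description precedes it below -/
import Mathlib

section
/- For positive integers n, i ≥ 0, and any integer ℓ with 1 ≤ ℓ ≤ n, the sum ∑_{k=ℓ}^{n} k · C(n-k+i, i) · (n+i+1)^{k-ℓ} · n^{n-k+i} equals C(n-ℓ+i+1, i+1) · n^{n-ℓ+i+1}. -/
private lemma kloeve_aux (n i : ℕ) (hn : 0 < n) :
    ∀ d l : ℕ, 1 ≤ l → l ≤ n → n - l = d →
      ∑ k ∈ Finset.Icc l n,
          k * Nat.choose (n - k + i) i * (n + i + 1) ^ (k - l) * n ^ (n - k + i)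
        = Nat.choose (n - l + i + 1) (i + 1) * n ^ (n - l + i + 1) := by
  intro d
  induction d with
  | zero =>
      intro l hl1 hln hd
      have hl : l = n := by omega
      subst hl
      simp [Nat.sub_self, pow_succ, Nat.mul_comm]
  | succ d ih =>
      intro l hl1 hln hd
      have hlt : l < n := by omega
      have hsplit : Finset.Icc l n = insert l (Finset.Icc (l + 1) n) := by
        rw [Finset.Icc_add_one_left_eq_Ioc, Finset.Ioc_insert_left hln]
      rw [hsplit, Finset.sum_insert (by simp)]
      have hstep : ∑ k ∈ Finset.Icc (l + 1) n,
          k * Nat.choose (n - k + i) i * (n + i + 1) ^ (k - l) * n ^ (n - k + i)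
          = (n + i + 1) * ∑ k ∈ Finset.Icc (l + 1) n,
          k * Nat.choose (n - k + i) i * (n + i + 1) ^ (k - (l + 1)) * n ^ (n - k + i) := by
        rw [Finset.mul_sum]
        refine Finset.sum_congr rfl ?_
        intro k hk
        have hk1 : l + 1 ≤ k := (Finset.mem_Icc.mp hk).1
        have hexp : k - l = (k - (l + 1)) + 1 := by omega
        rw [hexp, pow_succ]
        ring
      rw [hstep, ih (l + 1) (by omega) (by omega) (by omega)]
      have h1 : n - (l + 1) = d := by omega
      have h2 : n - l = d + 1 := by omega
      rw [h1, h2]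
      have hn' : n = l + d + 1 := by omega
      -- key binomial facts
      have hpascal : Nat.choose (d + i + 2) (i + 1)
          = Nat.choose (d + i + 1) i + Nat.choose (d + i + 1) (i + 1) := by
        have := Nat.succ_sub_one (d + i + 1)
        rw [show d + i + 2 = (d + i + 1) + 1 by ring, Nat.choose_succ_succ]
      have hfac : Nat.choose (d + i + 1) (i + 1) * (i + 1)
          = Nat.choose (d + i + 1) i * (d + 1) := by
        have := Nat.choose_succ_right_eq (d + i + 1) i
        simpa [show d + i + 1 - i = d + 1 by omega] using this
      have key : l * Nat.choose (d + i + 1) i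
          + (n + i + 1) * Nat.choose (d + i + 1) (i + 1)
          = Nat.choose (d + i + 2) (i + 1) * n := by
        rw [hpascal, hn']
        zify at hfac ⊢
        linear_combination hfac
      simp only [show d + 1 + i = d + i + 1 from by ring,
        show d + 1 + i + 1 = d + i + 2 from by ring,
        show d + i + 2 = (d + i + 1) + 1 from by ring, pow_succ,
        Nat.sub_self, pow_zero, mul_one]
      calc l * Nat.choose (d + i + 1) i * n ^ (d + i + 1)
            + (n + i + 1) * (Nat.choose (d + i + 1) (i + 1) * n ^ (d + i + 1))
          = (l * Nat.choose (d + i + 1) i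
              + (n + i + 1) * Nat.choose (d + i + 1) (i + 1)) * n ^ (d + i + 1) := by ring
        _ = Nat.choose (d + i + 2) (i + 1) * n * n ^ (d + i + 1) := by rw [key]
        _ = Nat.choose (d + i + 2) (i + 1) * (n ^ (d + i + 1) * n) := by ring

theorem kloeve_binom_sum (n i l : ℕ) (hn : 0 < n) (hl1 : 1 ≤ l) (hln : l ≤ n) :
    ∑ k ∈ Finset.Icc l n,
        k * Nat.choose (n - k + i) i * (n + i + 1) ^ (k - l) * n ^ (n - k + i)
      = Nat.choose (n - l + i + 1) (i + 1) * n ^ (n - l + i + 1) := by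
  exact kloeve_aux n i hn (n - l) l hl1 hln rfl
end

section
/- Let d be a positive integer and x a real number. With Ω_d defined as in the context, the coefficient identity Ω_d(x+1) = ∑_{m=0}^{d} C(d,m)·(d-m+1)^d·x^m holds. -/
open Finset



open Classical in
/-- The permanent-type sum `Ω_d(x)` of the `d × 2d` matrix `A_{d,x}`
(rows and columns here are 0-indexed: row `i`, column `j` correspond to
row `i+1`, column `j+1` of the paper, so the entry is `x` if `i+j+1 ≤ d`,
`1` if `d ≤ i+j` and `j ≤ d+i`, and `0` otherwise). The sum is over
injective sequences `ρ` with `ρ i ≤ d + i` (0-indexed form of `1 ≤ ρ_i ≤ d+i`). -/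
noncomputable def Omega (d : ℕ) (x : ℝ) : ℝ :=
  ∑ ρ ∈ Finset.univ.filter (fun ρ : Fin d → Fin (2 * d) =>
      Function.Injective ρ ∧ ∀ i : Fin d, (ρ i : ℕ) ≤ d + (i : ℕ)),
    ∏ i : Fin d,
      (if (i : ℕ) + (ρ i : ℕ) < d then x
       else if (ρ i : ℕ) ≤ d + (i : ℕ) then 1 else 0)



noncomputable def bz (S : Finset ℕ) (i : ℕ) : ℤ := ((S.filter (· < i)).card : ℤ)

noncomputable def Tz (n m : ℕ) (q : ℤ) : ℤ :=
  ∑ S ∈ (range n).powersetCard m,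
    ∏ i ∈ range n, (if i ∈ S then q + bz S i - i else q + bz S i)

lemma Tz_zero (n : ℕ) (q : ℤ) : Tz n 0 q = q ^ n := by
  simp [Tz, bz, Finset.powersetCard_zero]

lemma Tz_succ (n m : ℕ) (q : ℤ) :
    Tz (n+1) (m+1) q = (q + (m+1)) * Tz n (m+1) q + (q + m - n) * Tz n m q := by
  have hnot : (n : ℕ) ∉ range n := by simp
  rw [Tz, range_add_one, powersetCard_succ_insert hnot]
  rw [sum_union]
  · congr 1
    · -- first part: S ⊆ range n, n ∉ S
      rw [Tz, mul_sum]
      apply sum_congr rfl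
      intro S hS
      rw [mem_powersetCard] at hS
      have hnS : n ∉ S := fun h => hnot (hS.1 h)
      rw [prod_insert hnot, if_neg hnS]
      have hb : bz S n = (m+1 : ℤ) := by
        have : S.filter (· < n) = S := by
          apply filter_true_of_mem
          intro j hj
          exact mem_range.mp (hS.1 hj)
        simp [bz, this, hS.2]
      rw [hb]
    · -- second part: image (insert n)
      rw [sum_image, Tz, mul_sum]
      · apply sum_congr rfl
        intro S hS
        rw [mem_powersetCard] at hS
        have hnS : n ∉ S := fun h => hnot (hS.1 h)
        rw [prod_insert hnot, if_pos (mem_insert_self n S)]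
        have hb : bz (insert n S) n = (m : ℤ) := by
          rw [bz]
          have : (insert n S).filter (· < n) = S := by
            rw [filter_insert, if_neg (lt_irrefl n)]
            apply filter_true_of_mem
            intro j hj; exact mem_range.mp (hS.1 hj)
          rw [this, hS.2]
        rw [hb]
        have hprod : ∏ i ∈ range n, (if i ∈ insert n S then q + bz (insert n S) i - i else q + bz (insert n S) i)
            = ∏ i ∈ range n, (if i ∈ S then q + bz S i - i else q + bz S i) := by
          apply prod_congr rfl
          intro i hi
          have hin : i < n := mem_range.mp hi
          have h2 : bz (insert n S) i = bz S i := by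
            rw [bz, bz, filter_insert, if_neg (by omega)]
          by_cases hiS : i ∈ S
          · simp [mem_insert_of_mem hiS, hiS, h2]
          · simp [hiS, Nat.ne_of_lt hin, h2]
        rw [hprod]
      · intro S hS S' hS' h
        rw [Finset.mem_coe, mem_powersetCard] at hS hS'
        have h1 : n ∉ S := fun hh => hnot (hS.1 hh)
        have h2 : n ∉ S' := fun hh => hnot (hS'.1 hh)
        rw [← erase_insert h1, ← erase_insert h2, h]
  · -- disjoint
    rw [disjoint_left]
    intro S hS hS'
    rw [mem_powersetCard] at hS
    have : n ∉ S := fun h => hnot (hS.1 h)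
    rw [mem_image] at hS'
    obtain ⟨S', _, rfl⟩ := hS'
    exact this (mem_insert_self _ _)

lemma Tz_closed (n : ℕ) : ∀ (m : ℕ) (q : ℤ), Tz n m q = (n.choose m : ℤ) * q ^ n := by
  induction n with
  | zero =>
    intro m q
    match m with
    | 0 => simp [Tz_zero]
    | m+1 =>
      simp [Tz, Nat.choose_eq_zero_of_lt (Nat.succ_pos m)]
  | succ n ih =>
    intro m q
    match m with
    | 0 => simp [Tz_zero]
    | m+1 =>
      rw [Tz_succ, ih, ih]
      have h2 : (((n+1).choose (m+1) : ℕ) : ℤ) = (n.choose (m+1) : ℤ) + (n.choose m : ℤ) := by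
        rw [Nat.choose_succ_succ']; push_cast; ring
      have h1 : ((m:ℤ)+1) * (n.choose (m+1) : ℤ) = ((n:ℤ) - m) * (n.choose m : ℤ) := by
        rcases le_or_gt m n with h | h
        · have hc := Nat.choose_succ_right_eq n m
          have hcast : ((n.choose (m+1) * (m+1) : ℕ) : ℤ) = ((n.choose m * (n - m) : ℕ) : ℤ) := by
            exact_mod_cast congrArg (Nat.cast (R := ℤ)) hc
          push_cast [Nat.cast_sub h] at hcast
          linarith
        · rw [Nat.choose_eq_zero_of_lt h, Nat.choose_eq_zero_of_lt (by omega)]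
          simp
      have h2' : ((n+1).choose (m+1) : ℤ) = (n.choose (m+1) : ℤ) + (n.choose m : ℤ) := h2
      rw [pow_succ]
      linear_combination (q^n) * h1 - (q^n * q) * h2'


open Classical in
lemma card_filter_val_lt (N b : ℕ) (h : b ≤ N) :
    (Finset.univ.filter (fun v : Fin N => (v : ℕ) < b)).card = b := by
  rw [Finset.card_filter]
  rw [Fin.sum_univ_eq_sum_range (fun v => if v < b then 1 else 0)]
  rw [← Finset.sum_filter]
  have : (range N).filter (· < b) = range b := by
    ext j; simp [mem_range]; omega
  simp [this]

open Classical in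
lemma count_inj {n N : ℕ} (dflt : Fin N) (β : Fin n → ℕ) :
    ∀ R : Finset (Fin n), (∀ i ∈ R, β i ≤ N) →
      (∀ i ∈ R, ∀ j ∈ R, β i = β j → i = j) →
      (Finset.univ.filter (fun ρ : Fin n → Fin N =>
          (∀ i ∈ R, ∀ j ∈ R, ρ i = ρ j → i = j) ∧
          (∀ i ∈ R, (ρ i : ℕ) < β i) ∧ (∀ i, i ∉ R → ρ i = dflt))).card
        = ∏ i ∈ R, (β i - (R.filter (fun j => β j < β i)).card) := by
  intro R
  induction R using Finset.strongInduction with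
  | _ R ih =>
  intro hβN hβinj
  rcases R.eq_empty_or_nonempty with rfl | hne
  · rw [prod_empty]
    have hset : (Finset.univ.filter (fun ρ : Fin n → Fin N =>
          (∀ i ∈ (∅ : Finset (Fin n)), ∀ j ∈ (∅ : Finset (Fin n)), ρ i = ρ j → i = j) ∧
          (∀ i ∈ (∅ : Finset (Fin n)), (ρ i : ℕ) < β i) ∧
          (∀ i, i ∉ (∅ : Finset (Fin n)) → ρ i = dflt))) = {fun _ => dflt} := by
      ext ρ
      simp only [mem_filter, mem_univ, true_and, mem_singleton]
      constructor
      · rintro ⟨-, -, h3⟩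
        funext i
        exact h3 i (notMem_empty i)
      · rintro rfl
        exact ⟨fun i hi => absurd hi (notMem_empty i),
               fun i hi => absurd hi (notMem_empty i), fun i _ => rfl⟩
    rw [hset, card_singleton]
  · obtain ⟨i0, hi0R, hmax⟩ := R.exists_max_image β hne
    have hβlt : ∀ j ∈ R.erase i0, β j < β i0 := by
      intro j hj
      have hjR : j ∈ R := mem_of_mem_erase hj
      have hne' : j ≠ i0 := ne_of_mem_erase hj
      rcases lt_or_eq_of_le (hmax j hjR) with h | h
      · exact h
      · exact absurd (hβinj j hjR i0 hi0R h) hne'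
    have hmap : ∀ ρ ∈ (Finset.univ.filter (fun ρ : Fin n → Fin N =>
          (∀ i ∈ R, ∀ j ∈ R, ρ i = ρ j → i = j) ∧
          (∀ i ∈ R, (ρ i : ℕ) < β i) ∧ (∀ i, i ∉ R → ρ i = dflt))),
        Function.update ρ i0 dflt ∈ (Finset.univ.filter (fun ρ : Fin n → Fin N =>
          (∀ i ∈ R.erase i0, ∀ j ∈ R.erase i0, ρ i = ρ j → i = j) ∧
          (∀ i ∈ R.erase i0, (ρ i : ℕ) < β i) ∧ (∀ i, i ∉ R.erase i0 → ρ i = dflt))) := by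
      intro ρ hρ
      obtain ⟨-, h1, h2, h3⟩ := mem_filter.mp hρ
      rw [mem_filter]
      refine ⟨mem_univ _, ?_, ?_, ?_⟩
      · intro i hi j hj hij
        have hi' : i ≠ i0 := ne_of_mem_erase hi
        have hj' : j ≠ i0 := ne_of_mem_erase hj
        rw [Function.update_of_ne hi', Function.update_of_ne hj'] at hij
        exact h1 i (mem_of_mem_erase hi) j (mem_of_mem_erase hj) hij
      · intro i hi
        rw [Function.update_of_ne (ne_of_mem_erase hi)]
        exact h2 i (mem_of_mem_erase hi)
      · intro i hi
        by_cases hii : i = i0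
        · subst hii; rw [Function.update_self]
        · rw [Function.update_of_ne hii]
          apply h3
          intro hiR
          exact hi (mem_erase.mpr ⟨hii, hiR⟩)
    rw [Finset.card_eq_sum_card_fiberwise hmap]
    have hfiber : ∀ ρ' ∈ (Finset.univ.filter (fun ρ : Fin n → Fin N =>
          (∀ i ∈ R.erase i0, ∀ j ∈ R.erase i0, ρ i = ρ j → i = j) ∧
          (∀ i ∈ R.erase i0, (ρ i : ℕ) < β i) ∧ (∀ i, i ∉ R.erase i0 → ρ i = dflt))),
        ((Finset.univ.filter (fun ρ : Fin n → Fin N =>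
          (∀ i ∈ R, ∀ j ∈ R, ρ i = ρ j → i = j) ∧
          (∀ i ∈ R, (ρ i : ℕ) < β i) ∧ (∀ i, i ∉ R → ρ i = dflt))).filter
            (fun ρ => Function.update ρ i0 dflt = ρ')).card
          = β i0 - (R.erase i0).card := by
      intro ρ' hρ'
      obtain ⟨-, h1', h2', h3'⟩ := mem_filter.mp hρ'
      have hρ'i0 : ρ' i0 = dflt := h3' i0 (notMem_erase i0 R)
      have hsub : (R.erase i0).image ρ' ⊆ Finset.univ.filter (fun v : Fin N => (v:ℕ) < β i0) := by
        intro v hv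
        obtain ⟨j, hj, rfl⟩ := mem_image.mp hv
        simp only [mem_filter, mem_univ, true_and]
        exact lt_trans (h2' j hj) (hβlt j hj)
      have hA : ((Finset.univ.filter (fun v : Fin N => (v:ℕ) < β i0)) \ (R.erase i0).image ρ').card
          = β i0 - (R.erase i0).card := by
        rw [card_sdiff_of_subset hsub, card_filter_val_lt N (β i0) (hβN i0 hi0R),
          Finset.card_image_of_injOn]
        intro a ha b hb hab
        exact h1' a ha b hb hab
      rw [← hA]
      apply Finset.card_bij' (i := fun ρ _ => ρ i0)
        (j := fun v _ => Function.update ρ' i0 v)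
      · -- maps into A
        intro ρ hρ
        obtain ⟨hρs, hupd⟩ := mem_filter.mp hρ
        obtain ⟨-, h1, h2, h3⟩ := mem_filter.mp hρs
        rw [mem_sdiff]
        constructor
        · simp only [mem_filter, mem_univ, true_and]
          exact h2 i0 hi0R
        · intro hmem
          obtain ⟨j, hj, hje⟩ := mem_image.mp hmem
          have : ρ' j = ρ j := by
            rw [← hupd, Function.update_of_ne (ne_of_mem_erase hj)]
          rw [this] at hje
          exact (ne_of_mem_erase hj) (h1 j (mem_of_mem_erase hj) i0 hi0R hje)
      · -- maps back into fiber
        intro v hv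
        obtain ⟨hvlt, hvnotim⟩ := mem_sdiff.mp hv
        simp only [mem_filter, mem_univ, true_and] at hvlt
        rw [mem_filter, mem_filter]
        refine ⟨⟨mem_univ _, ?_, ?_, ?_⟩, ?_⟩
        · intro i hi j hj hij
          by_cases hii : i = i0 <;> by_cases hjj : j = i0
          · rw [hii, hjj]
          · subst hii
            rw [Function.update_self, Function.update_of_ne hjj] at hij
            exfalso
            exact hvnotim (mem_image.mpr ⟨j, mem_erase.mpr ⟨hjj, hj⟩, hij.symm⟩)
          · subst hjj
            rw [Function.update_self, Function.update_of_ne hii] at hij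
            exfalso
            exact hvnotim (mem_image.mpr ⟨i, mem_erase.mpr ⟨hii, hi⟩, hij⟩)
          · rw [Function.update_of_ne hii, Function.update_of_ne hjj] at hij
            exact h1' i (mem_erase.mpr ⟨hii, hi⟩) j (mem_erase.mpr ⟨hjj, hj⟩) hij
        · intro i hi
          by_cases hii : i = i0
          · subst hii; rw [Function.update_self]; exact hvlt
          · rw [Function.update_of_ne hii]
            exact h2' i (mem_erase.mpr ⟨hii, hi⟩)
        · intro i hi
          have hii : i ≠ i0 := fun he => hi (he ▸ hi0R)
          rw [Function.update_of_ne hii]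
          exact h3' i (fun hmem => hi (mem_of_mem_erase hmem))
        · -- update (update ρ' i0 v) i0 dflt = ρ'
          funext j
          by_cases hjj : j = i0
          · subst hjj; rw [Function.update_self, hρ'i0]
          · rw [Function.update_of_ne hjj, Function.update_of_ne hjj]
      · -- left inverse
        intro ρ hρ
        obtain ⟨hρs, hupd⟩ := mem_filter.mp hρ
        funext j
        by_cases hjj : j = i0
        · subst hjj; rw [Function.update_self]
        · rw [Function.update_of_ne hjj, ← hupd, Function.update_of_ne hjj]
      · -- right inverse
        intro v hv
        rw [Function.update_self]
    rw [Finset.sum_congr rfl hfiber, Finset.sum_const, smul_eq_mul]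
    rw [ih (R.erase i0) (erase_ssubset hi0R)
      (fun i hi => hβN i (mem_of_mem_erase hi))
      (fun i hi j hj hij => hβinj i (mem_of_mem_erase hi) j (mem_of_mem_erase hj) hij)]
    rw [← Finset.mul_prod_erase R _ hi0R]
    have hpos0 : R.filter (fun j => β j < β i0) = R.erase i0 := by
      ext j
      simp only [mem_filter, mem_erase]
      constructor
      · rintro ⟨hjR, hlt⟩
        exact ⟨fun he => absurd (he ▸ hlt) (lt_irrefl _), hjR⟩
      · rintro ⟨hne', hjR⟩
        exact ⟨hjR, hβlt j (mem_erase.mpr ⟨hne', hjR⟩)⟩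
    have hposeq : ∀ i ∈ R.erase i0,
        (β i - ((R.erase i0).filter (fun j => β j < β i)).card)
          = (β i - (R.filter (fun j => β j < β i)).card) := by
      intro i hi
      congr 2
      ext j
      simp only [mem_filter, mem_erase]
      constructor
      · rintro ⟨⟨_, hjR⟩, hlt⟩
        exact ⟨hjR, hlt⟩
      · rintro ⟨hjR, hlt⟩
        refine ⟨⟨?_, hjR⟩, hlt⟩
        rintro rfl
        exact absurd hlt (not_lt.mpr (hmax i (mem_of_mem_erase hi)))
    rw [Finset.prod_congr rfl hposeq, hpos0]
    ring

open Classical in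
lemma key_count (d : ℕ) (hd : 0 < d) (m : ℕ) (hm : m ≤ d) :
    ((∑ t ∈ (Finset.univ : Finset (Fin d)).powersetCard m,
      ((Finset.univ.filter (fun ρ : Fin d → Fin (2 * d) =>
        (Function.Injective ρ ∧ ∀ i : Fin d, (ρ i : ℕ) ≤ d + (i : ℕ)) ∧
        (∀ i ∈ t, (i : ℕ) + (ρ i : ℕ) < d))).card) : ℤ))
    = (d.choose m : ℤ) * ((d : ℤ) - m + 1) ^ d := by
  have hd2 : 0 < 2 * d := by omega
  set dflt : Fin (2 * d) := ⟨0, hd2⟩ with hdflt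
  -- Step 1: rewrite each count as a product
  have hcount : ∀ t ∈ (Finset.univ : Finset (Fin d)).powersetCard m,
      ((Finset.univ.filter (fun ρ : Fin d → Fin (2 * d) =>
        (Function.Injective ρ ∧ ∀ i : Fin d, (ρ i : ℕ) ≤ d + (i : ℕ)) ∧
        (∀ i ∈ t, (i : ℕ) + (ρ i : ℕ) < d))).card)
      = ∏ i ∈ (Finset.univ : Finset (Fin d)),
          ((if i ∈ t then d - (i : ℕ) else d + 1 + (i : ℕ))
            - (Finset.univ.filter (fun j : Fin d =>
                (if j ∈ t then d - (j : ℕ) else d + 1 + (j : ℕ))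
                  < (if i ∈ t then d - (i : ℕ) else d + 1 + (i : ℕ)))).card) := by
    intro t _
    have hsetEq : (Finset.univ.filter (fun ρ : Fin d → Fin (2 * d) =>
        (Function.Injective ρ ∧ ∀ i : Fin d, (ρ i : ℕ) ≤ d + (i : ℕ)) ∧
        (∀ i ∈ t, (i : ℕ) + (ρ i : ℕ) < d)))
        = (Finset.univ.filter (fun ρ : Fin d → Fin (2 * d) =>
          (∀ i ∈ (Finset.univ : Finset (Fin d)), ∀ j ∈ (Finset.univ : Finset (Fin d)),
            ρ i = ρ j → i = j) ∧
          (∀ i ∈ (Finset.univ : Finset (Fin d)),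
            (ρ i : ℕ) < (if i ∈ t then d - (i : ℕ) else d + 1 + (i : ℕ))) ∧
          (∀ i, i ∉ (Finset.univ : Finset (Fin d)) → ρ i = dflt))) := by
      ext ρ
      simp only [mem_filter, mem_univ, true_and]
      constructor
      · rintro ⟨⟨hinj, hb⟩, hsm⟩
        refine ⟨fun i _ j _ h => hinj h, fun i _ => ?_, fun i hi => absurd trivial hi⟩
        by_cases hit : i ∈ t
        · rw [if_pos hit]
          have h1 := hsm i hit
          have h2 := i.isLt
          omega
        · rw [if_neg hit]
          have h1 := hb i
          omega
      · rintro ⟨hinj, hb, -⟩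
        refine ⟨⟨fun a b h => hinj a trivial b trivial h, fun i => ?_⟩,
          fun i hit => ?_⟩
        · have h1 := hb i trivial
          have h2 := i.isLt
          by_cases hit : i ∈ t
          · rw [if_pos hit] at h1; omega
          · rw [if_neg hit] at h1; omega
        · have h1 := hb i trivial
          rw [if_pos hit] at h1
          omega
    rw [hsetEq]
    apply count_inj dflt (fun i : Fin d => if i ∈ t then d - (i : ℕ) else d + 1 + (i : ℕ))
    · intro i _
      have := i.isLt
      by_cases hit : i ∈ t
      · rw [if_pos hit]; omega
      · rw [if_neg hit]; omega
    · intro i _ j _ hij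
      have hi := i.isLt
      have hj := j.isLt
      by_cases hit : i ∈ t <;> by_cases hjt : j ∈ t
      · rw [if_pos hit, if_pos hjt] at hij
        exact Fin.ext (by omega)
      · rw [if_pos hit, if_neg hjt] at hij; omega
      · rw [if_neg hit, if_pos hjt] at hij; omega
      · rw [if_neg hit, if_neg hjt] at hij
        exact Fin.ext (by omega)
  rw [Finset.sum_congr rfl (fun t ht => congrArg (fun k : ℕ => (k : ℤ)) (hcount t ht))]
  rw [← Tz_closed d m ((d : ℤ) - m + 1)]
  rw [Tz]
  -- bijection between subsets of Fin d and subsets of range d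
  apply Finset.sum_bij' (i := fun (t : Finset (Fin d)) (_ : t ∈ _) => t.image Fin.val)
    (j := fun (S : Finset ℕ) (_ : S ∈ _) =>
      Finset.univ.filter (fun i : Fin d => (i : ℕ) ∈ S))
  · -- hi : image lands in powersetCard m (range d)
    intro t ht
    rw [mem_powersetCard] at ht ⊢
    constructor
    · intro a ha
      obtain ⟨i, _, rfl⟩ := mem_image.mp ha
      exact mem_range.mpr i.isLt
    · rw [Finset.card_image_of_injective _ Fin.val_injective, ht.2]
  · -- hj
    intro S hS
    rw [mem_powersetCard] at hS ⊢
    refine ⟨subset_univ _, ?_⟩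
    rw [← hS.2]
    apply Finset.card_bij (i := fun (i : Fin d) (_ : i ∈ _) => (i : ℕ))
    · intro i hi
      exact (mem_filter.mp hi).2
    · intro i hi j hj hij
      exact Fin.ext hij
    · intro a ha
      have had : a < d := mem_range.mp (hS.1 ha)
      exact ⟨⟨a, had⟩, mem_filter.mpr ⟨mem_univ _, ha⟩, rfl⟩
  · -- left_inv
    intro t ht
    ext i
    simp only [mem_filter, mem_univ, true_and, mem_image]
    constructor
    · rintro ⟨j, hj, hji⟩
      rwa [← Fin.ext hji]
    · intro hi
      exact ⟨i, hi, rfl⟩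
  · -- right_inv
    intro S hS
    rw [mem_powersetCard] at hS
    ext a
    simp only [mem_image, mem_filter, mem_univ, true_and]
    constructor
    · rintro ⟨i, hi, rfl⟩
      exact hi
    · intro ha
      exact ⟨⟨a, mem_range.mp (hS.1 ha)⟩, ha, rfl⟩
  · -- summand equality
    intro t ht
    have htm : t.card = m := (mem_powersetCard.mp ht).2
    show ((∏ i : Fin d, _ : ℕ) : ℤ) = _
    rw [Nat.cast_prod]
    rw [← Fin.prod_univ_eq_prod_range (fun k =>
      (if k ∈ t.image Fin.val then ((d : ℤ) - m + 1) + bz (t.image Fin.val) k - k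
        else ((d : ℤ) - m + 1) + bz (t.image Fin.val) k)) d]
    apply prod_congr rfl
    intro i _
    have hid : (i : ℕ) < d := i.isLt
    have hbzv : bz (t.image Fin.val) (i : ℕ)
        = ((t.filter (fun j : Fin d => (j : ℕ) < (i : ℕ))).card : ℤ) := by
      rw [bz]
      congr 1
      have himg : (t.image Fin.val).filter (· < (i : ℕ))
          = (t.filter (fun j : Fin d => (j : ℕ) < (i : ℕ))).image Fin.val := by
        ext a
        simp only [mem_filter, mem_image]
        constructor
        · rintro ⟨⟨j, hj, rfl⟩, h⟩
          exact ⟨j, ⟨hj, h⟩, rfl⟩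
        · rintro ⟨j, ⟨hj, h⟩, rfl⟩
          exact ⟨⟨j, hj, rfl⟩, h⟩
      rw [himg, Finset.card_image_of_injective _ Fin.val_injective]
    have hbm : (t.filter (fun j : Fin d => (j : ℕ) < (i : ℕ))).card ≤ m :=
      htm ▸ Finset.card_filter_le t _
    by_cases hit : i ∈ t
    · -- i ∈ t
      have hmemS : (i : ℕ) ∈ t.image Fin.val := mem_image.mpr ⟨i, hit, rfl⟩
      have hpos : (Finset.univ.filter (fun j : Fin d =>
          (if j ∈ t then d - (j : ℕ) else d + 1 + (j : ℕ))
            < (if i ∈ t then d - (i : ℕ) else d + 1 + (i : ℕ))))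
          = t.filter (fun j : Fin d => (i : ℕ) < (j : ℕ)) := by
        ext j
        have hjd : (j : ℕ) < d := j.isLt
        by_cases hjt : j ∈ t <;>
          simp only [mem_filter, mem_univ, true_and, hit, hjt, if_true, if_false,
            false_and, and_false, iff_false, true_and] <;>
          omega
      have huniv : (Finset.univ.filter (fun j : Fin d => (i : ℕ) < (j : ℕ))).card
          + ((i : ℕ) + 1) = d := by
        have h1 := Finset.card_filter_add_card_filter_not
          (s := (Finset.univ : Finset (Fin d))) (p := fun j : Fin d => (i : ℕ) < (j : ℕ))
        have h2 : (Finset.univ.filter (fun j : Fin d => ¬ (i : ℕ) < (j : ℕ)))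
            = Finset.univ.filter (fun j : Fin d => (j : ℕ) < (i : ℕ) + 1) := by
          ext j
          simp only [mem_filter, mem_univ, true_and]
          omega
        rw [h2, card_filter_val_lt d ((i : ℕ) + 1) (by omega)] at h1
        have h3 : (Finset.univ : Finset (Fin d)).card = d := by
          rw [Finset.card_univ, Fintype.card_fin]
        omega
      have hcle : (t.filter (fun j : Fin d => (i : ℕ) < (j : ℕ))).card + (i : ℕ) + 1 ≤ d := by
        have := Finset.card_le_card
          (Finset.filter_subset_filter (fun j : Fin d => (i : ℕ) < (j : ℕ)) (subset_univ t))
        omega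
      have hsplit : (t.filter (fun j : Fin d => (j : ℕ) < (i : ℕ))).card + 1
          + (t.filter (fun j : Fin d => (i : ℕ) < (j : ℕ))).card = m := by
        have h1 := Finset.card_filter_add_card_filter_not
          (s := t) (p := fun j : Fin d => (j : ℕ) < (i : ℕ))
        have h2 : t.filter (fun j : Fin d => ¬ (j : ℕ) < (i : ℕ))
            = insert i (t.filter (fun j : Fin d => (i : ℕ) < (j : ℕ))) := by
          ext j
          simp only [mem_filter, mem_insert]
          constructor
          · rintro ⟨hjt, hge⟩
            rcases Nat.lt_or_ge (i : ℕ) (j : ℕ) with h | h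
            · exact Or.inr ⟨hjt, h⟩
            · exact Or.inl (Fin.ext (by omega))
          · rintro (rfl | ⟨hjt, hlt⟩)
            · exact ⟨hit, by omega⟩
            · exact ⟨hjt, by omega⟩
        have h3 : i ∉ t.filter (fun j : Fin d => (i : ℕ) < (j : ℕ)) := by
          simp
        rw [h2, Finset.card_insert_of_notMem h3] at h1
        rw [htm] at h1
        omega
      rw [hpos]
      simp only [hit, if_true, hmemS, hbzv]
      omega
    · -- i ∉ t
      have hmemS : (i : ℕ) ∉ t.image Fin.val := by
        intro h
        obtain ⟨j, hj, hje⟩ := mem_image.mp h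
        exact hit (Fin.ext hje ▸ hj)
      have hpos : (Finset.univ.filter (fun j : Fin d =>
          (if j ∈ t then d - (j : ℕ) else d + 1 + (j : ℕ))
            < (if i ∈ t then d - (i : ℕ) else d + 1 + (i : ℕ))))
          = t ∪ ((Finset.univ.filter (fun j : Fin d => (j : ℕ) < (i : ℕ))) \ t) := by
        ext j
        have hjd : (j : ℕ) < d := j.isLt
        by_cases hjt : j ∈ t <;>
          simp only [mem_filter, mem_univ, true_and, mem_union, mem_sdiff, hit, hjt,
            if_true, if_false, not_true, not_false_iff, and_true, and_false, or_false,
            false_or, true_and, iff_true, iff_false, true_or, or_true] <;>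
          omega
      have hAcard : (Finset.univ.filter (fun j : Fin d => (j : ℕ) < (i : ℕ))).card
          = (i : ℕ) := card_filter_val_lt d (i : ℕ) (by omega)
      have hAint : (Finset.univ.filter (fun j : Fin d => (j : ℕ) < (i : ℕ))) ∩ t
          = t.filter (fun j : Fin d => (j : ℕ) < (i : ℕ)) := by
        ext j
        simp only [mem_inter, mem_filter, mem_univ, true_and]
        tauto
      have hsd := Finset.card_sdiff_add_card_inter
        (Finset.univ.filter (fun j : Fin d => (j : ℕ) < (i : ℕ))) t
      rw [hAint, hAcard] at hsd
      rw [hpos, Finset.card_union_of_disjoint Finset.disjoint_sdiff, htm]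
      simp only [hit, if_false, hmemS, hbzv]
      omega

open Classical in
theorem kloeve_shifted (d : ℕ) (hd : 0 < d) (x : ℝ) :
    Omega d (x + 1) = ∑ m ∈ Finset.range (d + 1),
      (Nat.choose d m : ℝ) * ((d : ℝ) - (m : ℝ) + 1) ^ d * x ^ m := by
  rw [Omega]
  have hstep : ∀ ρ ∈ Finset.univ.filter (fun ρ : Fin d → Fin (2 * d) =>
      Function.Injective ρ ∧ ∀ i : Fin d, (ρ i : ℕ) ≤ d + (i : ℕ)),
      (∏ i : Fin d, (if (i : ℕ) + (ρ i : ℕ) < d then x + 1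
        else if (ρ i : ℕ) ≤ d + (i : ℕ) then 1 else 0))
      = ∑ t ∈ (Finset.univ : Finset (Fin d)).powerset,
          (if (∀ i ∈ t, (i : ℕ) + (ρ i : ℕ) < d) then x ^ t.card else 0) := by
    intro ρ hρ
    obtain ⟨-, -, h2⟩ := mem_filter.mp hρ
    have e1 : (∏ i : Fin d, (if (i : ℕ) + (ρ i : ℕ) < d then x + 1
        else if (ρ i : ℕ) ≤ d + (i : ℕ) then 1 else 0))
        = ∏ i : Fin d, ((if (i : ℕ) + (ρ i : ℕ) < d then x else 0) + 1) := by
      apply prod_congr rfl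
      intro i _
      by_cases h : (i : ℕ) + (ρ i : ℕ) < d
      · rw [if_pos h, if_pos h]
      · rw [if_neg h, if_neg h, if_pos (h2 i), zero_add]
    rw [e1, Finset.prod_add]
    apply sum_congr rfl
    intro t _
    rw [Finset.prod_const_one, mul_one]
    by_cases h : ∀ i ∈ t, (i : ℕ) + (ρ i : ℕ) < d
    · rw [if_pos h]
      rw [← Finset.prod_const]
      apply prod_congr rfl
      intro i hi
      rw [if_pos (h i hi)]
    · rw [if_neg h]
      push_neg at h
      obtain ⟨i, hi, hni⟩ := h
      exact prod_eq_zero hi (by rw [if_neg (not_lt.mpr hni)])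
  rw [Finset.sum_congr rfl hstep]
  rw [Finset.sum_comm]
  have hinner : ∀ t ∈ (Finset.univ : Finset (Fin d)).powerset,
      (∑ ρ ∈ Finset.univ.filter (fun ρ : Fin d → Fin (2 * d) =>
        Function.Injective ρ ∧ ∀ i : Fin d, (ρ i : ℕ) ≤ d + (i : ℕ)),
        (if (∀ i ∈ t, (i : ℕ) + (ρ i : ℕ) < d) then x ^ t.card else 0))
      = ((Finset.univ.filter (fun ρ : Fin d → Fin (2 * d) =>
          (Function.Injective ρ ∧ ∀ i : Fin d, (ρ i : ℕ) ≤ d + (i : ℕ)) ∧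
          (∀ i ∈ t, (i : ℕ) + (ρ i : ℕ) < d))).card : ℝ) * x ^ t.card := by
    intro t _
    rw [← Finset.sum_filter, Finset.filter_filter, Finset.sum_const, nsmul_eq_mul]
  rw [Finset.sum_congr rfl hinner]
  rw [Finset.sum_powerset]
  have hcard : (Finset.univ : Finset (Fin d)).card = d := by
    rw [Finset.card_univ, Fintype.card_fin]
  rw [hcard]
  apply sum_congr rfl
  intro m hm
  have hmd : m ≤ d := by
    rw [mem_range] at hm; omega
  have hsum : ∀ t ∈ (Finset.univ : Finset (Fin d)).powersetCard m,
      ((Finset.univ.filter (fun ρ : Fin d → Fin (2 * d) =>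
          (Function.Injective ρ ∧ ∀ i : Fin d, (ρ i : ℕ) ≤ d + (i : ℕ)) ∧
          (∀ i ∈ t, (i : ℕ) + (ρ i : ℕ) < d))).card : ℝ) * x ^ t.card
      = ((Finset.univ.filter (fun ρ : Fin d → Fin (2 * d) =>
          (Function.Injective ρ ∧ ∀ i : Fin d, (ρ i : ℕ) ≤ d + (i : ℕ)) ∧
          (∀ i ∈ t, (i : ℕ) + (ρ i : ℕ) < d))).card : ℝ) * x ^ m := by
    intro t ht
    rw [(Finset.mem_powersetCard.mp ht).2]
  rw [Finset.sum_congr rfl hsum, ← Finset.sum_mul]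
  have hkey := key_count d hd m hmd
  have hreal : (∑ t ∈ (Finset.univ : Finset (Fin d)).powersetCard m,
      ((Finset.univ.filter (fun ρ : Fin d → Fin (2 * d) =>
          (Function.Injective ρ ∧ ∀ i : Fin d, (ρ i : ℕ) ≤ d + (i : ℕ)) ∧
          (∀ i ∈ t, (i : ℕ) + (ρ i : ℕ) < d))).card : ℝ))
      = (Nat.choose d m : ℝ) * ((d : ℝ) - (m : ℝ) + 1) ^ d := by
    exact_mod_cast congrArg (fun z : ℤ => (z : ℝ)) hkey
  rw [hreal]
end
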